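/- Key algebraic inequality for the lattice ℤ with CD_{m,1}: for m > 1 and a, b, σ, ν > 0 satisfying σ^{m/(m-1)} ≥ 2a^{m/(m-1)} − 1 − 2a^{1/(m-1)} + a^{(m+1)/(m-1)} + a^{1/(m-1)}b^{m/(m-1)} and ν^{m/(m-1)} ≥ 2b^{m/(m-1)} − 1 − 2b^{1/(m-1)} + b^{(m+1)/(m-1)} + a^{m/(m-1)}b^{1/(m-1)}, one has −2(m-1)(a^{m/(m-1)}+b^{m/(m-1)}−2) − a^{m/(m-1)}(a^{m/(m-1)}+b^{m/(m-1)}−2) + ma(σ^{m/(m-1)}+1−2a^{m/(m-1)}) − b^{m/(m-1)}(a^{m/(m-1)}+b^{m/(m-1)}−2) + mb(ν^{m/(m-1)}+1−2b^{m/(m-1)}) ≥ (m-1)(2 − a^{m/(m-1)} − b^{m/(m-1)})². -/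

import Mathlib

theorem lattice_CD_m_one (m : ℝ) (hm : 1 < m) (a b σ ν : ℝ)
    (ha : 0 < a) (hb : 0 < b) (hσ : 0 < σ) (hν : 0 < ν)
    (h2 : σ ^ (m / (m - 1)) ≥ 2 * a ^ (m / (m - 1)) - 1 - 2 * a ^ (1 / (m - 1))
            + a ^ ((m + 1) / (m - 1)) + a ^ (1 / (m - 1)) * b ^ (m / (m - 1)))
    (h3 : ν ^ (m / (m - 1)) ≥ 2 * b ^ (m / (m - 1)) - 1 - 2 * b ^ (1 / (m - 1))
            + b ^ ((m + 1) / (m - 1)) + a ^ (m / (m - 1)) * b ^ (1 / (m - 1))) :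
    -2 * (m - 1) * (a ^ (m / (m - 1)) + b ^ (m / (m - 1)) - 2)
      - a ^ (m / (m - 1)) * (a ^ (m / (m - 1)) + b ^ (m / (m - 1)) - 2)
      + m * a * (σ ^ (m / (m - 1)) + 1 - 2 * a ^ (m / (m - 1)))
      - b ^ (m / (m - 1)) * (a ^ (m / (m - 1)) + b ^ (m / (m - 1)) - 2)
      + m * b * (ν ^ (m / (m - 1)) + 1 - 2 * b ^ (m / (m - 1)))
    ≥ (m - 1) * (2 - a ^ (m / (m - 1)) - b ^ (m / (m - 1))) ^ (2 : ℕ) := by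
  have hm1 : (0:ℝ) < m - 1 := by linarith
  have key : ∀ x : ℝ, 0 < x →
      x ^ ((m + 1) / (m - 1)) = x ^ (m / (m - 1)) * x ^ (1 / (m - 1)) ∧
      x * x ^ (1 / (m - 1)) = x ^ (m / (m - 1)) := by
    intro x hx
    constructor
    · rw [← Real.rpow_add hx]
      congr 1
      field_simp
    · nth_rewrite 1 [← Real.rpow_one x]
      rw [← Real.rpow_add hx]
      congr 1
      field_simp
      ring
  obtain ⟨ea1, ea2⟩ := key a ha
  obtain ⟨eb1, eb2⟩ := key b hb
  set A := a ^ (m / (m - 1)) with hA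
  set B := b ^ (m / (m - 1)) with hB
  set α := a ^ (1 / (m - 1)) with hα
  set β := b ^ (1 / (m - 1)) with hβ
  have hma : 0 < m * a := by positivity
  have hmb : 0 < m * b := by positivity
  have k1 : m * a * (σ ^ (m / (m - 1)) + 1 - 2 * A) ≥ m * a * (α * (A + B - 2)) := by
    have : σ ^ (m / (m - 1)) + 1 - 2 * A ≥ α * (A + B - 2) := by
      nlinarith [h2, ea1]
    nlinarith [this, hma]
  have k2 : m * b * (ν ^ (m / (m - 1)) + 1 - 2 * B) ≥ m * b * (β * (A + B - 2)) := by
    have : ν ^ (m / (m - 1)) + 1 - 2 * B ≥ β * (A + B - 2) := by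
      nlinarith [h3, eb1]
    nlinarith [this, hmb]
  have e1 : m * a * (α * (A + B - 2)) = m * A * (A + B - 2) := by
    rw [← ea2]; ring
  have e2 : m * b * (β * (A + B - 2)) = m * B * (A + B - 2) := by
    rw [← eb2]; ring
  rw [e1] at k1
  rw [e2] at k2
  have id1 : -2 * (m - 1) * (A + B - 2) - A * (A + B - 2) + m * A * (A + B - 2)
      - B * (A + B - 2) + m * B * (A + B - 2) = (m - 1) * (2 - A - B) ^ (2 : ℕ) := by
    ring
  linarith [k1, k2]
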